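/- Under event ℰ' (with parameters r ∈ (0,1/2], α ∈ [τ^{-1},1]), the assignable user set P̂ = {p ∈ P(M∖M_T) : c(p) < c(p̂)} satisfies P̂ ⊆ P_o, where p̂ is the user at location ⌈(1−2r^{-1}α^{1/3})·|S_c(P(M_T),B(A_T))|⌉ of S_c(P(M_T),B(A_T)). -/

import Mathlib

/-- Size of the canonical assignment restricted to users `PT` and slots `BT`
(indices sorted increasingly = increasing cost / decreasing value order). -/
noncomputable def canonSize (c v : ℕ → ℝ) (PT BT : Finset ℕ) : ℕ :=
  (List.zip ((PT.sort (· ≤ ·)).map c) ((BT.sort (· ≤ ·)).map v)).countP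
    (fun x => decide (x.1 < x.2))

lemma downclosed_eq_range (S : Finset ℕ) (h : ∀ i j : ℕ, i ≤ j → j ∈ S → i ∈ S) :
    S = Finset.range S.card := by
  have hsub : S ⊆ Finset.range S.card := by
    intro i hi
    simp only [Finset.mem_range]
    by_contra hlt
    push_neg at hlt
    have hss : Finset.range (i+1) ⊆ S := fun j hj =>
      h j i (Nat.lt_succ_iff.mp (Finset.mem_range.mp hj)) hi
    have := Finset.card_le_card hss
    simp at this; omega
  exact Finset.eq_of_subset_of_card_le hsub (by simp)

lemma countP_sort (S : Finset ℕ) (p : ℕ → Bool) :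
    (S.sort (· ≤ ·)).countP p = (S.filter (fun a => p a)).card := by
  rw [(Finset.sort_perm_toList S (· ≤ ·)).countP_eq p]
  rw [Finset.toList, List.countP_eq_length_filter, Finset.card, Finset.filter_val]
  conv_rhs => rw [← Multiset.coe_toList S.val, Multiset.filter_coe, Multiset.coe_card]
  simp

lemma countP_all_zero (τ : ℕ) (l : List ℕ) (h : ∀ x ∈ l, τ ≤ x) :
    l.countP (fun a => decide (a < τ)) = 0 := by
  rw [List.countP_eq_zero]
  intro x hx
  simpa using Nat.not_lt.mpr (h x hx)

lemma countP_zip_le_max (τ : ℕ) : ∀ (l₁ l₂ : List ℕ),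
    l₁.Pairwise (· ≤ ·) → l₂.Pairwise (· ≤ ·) →
    (l₁.zip l₂).countP (fun x => decide (x.1 < τ ∨ x.2 < τ)) ≤
      max (l₁.countP (fun a => decide (a < τ))) (l₂.countP (fun a => decide (a < τ)))
  | [], l₂, _, _ => by simp
  | a :: t₁, [], _, _ => by simp
  | a :: t₁, b :: t₂, h₁, h₂ => by
    have ih := countP_zip_le_max τ t₁ t₂ h₁.of_cons h₂.of_cons
    simp only [List.zip_cons_cons, List.countP_cons]
    by_cases ha : a < τ <;> by_cases hb : b < τ
    · simp only [decide_eq_true_eq, if_pos (Or.inl ha), if_pos ha, if_pos hb]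
      omega
    · have h0 : t₂.countP (fun a => decide (a < τ)) = 0 :=
        countP_all_zero τ t₂ (fun x hx => le_trans (Nat.not_lt.mp hb)
          (List.rel_of_pairwise_cons h₂ hx))
      simp only [decide_eq_true_eq, if_pos (Or.inl ha), if_pos ha, if_neg hb]
      omega
    · have h0 : t₁.countP (fun a => decide (a < τ)) = 0 :=
        countP_all_zero τ t₁ (fun x hx => le_trans (Nat.not_lt.mp ha)
          (List.rel_of_pairwise_cons h₁ hx))
      simp only [decide_eq_true_eq, if_pos (Or.inr hb), if_neg ha, if_pos hb]
      omega
    · simp only [decide_eq_true_eq, if_neg (by tauto : ¬(a < τ ∨ b < τ)), if_neg ha, if_neg hb]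
      omega

/-- Under event `ℰ'` (the four concentration inequalities
with slack `α^{1/3}τ`), the assignable user set
`P̂ = {p ∈ P(M∖M_T) : c p < c p̂}` satisfies `P̂ ⊆ P_o`, where `p̂` is the user
at (1-based, non-dummy) location `L = ⌈(1−2r⁻¹α^{1/3})·|S_c(P(M_T),B(A_T))|⌉`
of `S_c(P(M_T),B(A_T))`, i.e. the `L`-th cheapest user of `PT`. -/
theorem stmt_11 (n m : ℕ) (c v : ℕ → ℝ)
    (hc : StrictMono c) (hv : StrictAnti v)
    (hcv : ∀ i j : ℕ, c i ≠ v j)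
    (PT BT : Finset ℕ) (hPT : PT ⊆ Finset.range n) (hBT : BT ⊆ Finset.range m)
    (r α : ℝ) (hr : 0 < r) (hr2 : r ≤ 1 / 2)
    (Po : Finset ℕ)
    (hPo : Po = (Finset.range (min n m)).filter (fun i => c i < v i))
    (τ : ℕ) (hτ : τ = Po.card) (hτpos : 0 < τ)
    (hα : 1 / (τ : ℝ) ≤ α) (hα1 : α ≤ 1)
    (s : ℕ) (hs : s = canonSize c v PT BT)
    (L : ℕ) (hL : L = ⌈(1 - 2 * r⁻¹ * α ^ ((1 : ℝ) / 3)) * (s : ℝ)⌉₊)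
    (hLpos : 0 < L)
    (phat : ℕ) (hphat₁ : phat ∈ PT)
    (hphat₂ : (PT.filter (fun q => q ≤ phat)).card = L)
    (k : ℕ) (hk : k = ⌈(1 - 6 * r⁻¹ * α ^ ((1 : ℝ) / 3)) * (τ : ℝ)⌉₊)
    (hE1 : |((Po ∩ PT).card : ℝ) - r * τ| ≤ α ^ ((1 : ℝ) / 3) * τ)
    (hE2 : |((Po ∩ BT).card : ℝ) - r * τ| ≤ α ^ ((1 : ℝ) / 3) * τ)
    (hE3 : |((Finset.range k ∩ PT).card : ℝ) - r * k| ≤ α ^ ((1 : ℝ) / 3) * τ)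
    (hE4 : |((Finset.range k ∩ BT).card : ℝ) - r * k| ≤ α ^ ((1 : ℝ) / 3) * τ) :
    ∀ p : ℕ, p < n → p ∉ PT → c p < c phat → p ∈ Po := by
  -- Step 1: Po = range τ
  have hdc : ∀ i j : ℕ, i ≤ j → j ∈ Po → i ∈ Po := by
    intro i j hij hjPo
    rw [hPo, Finset.mem_filter, Finset.mem_range] at hjPo ⊢
    refine ⟨lt_of_le_of_lt hij hjPo.1, lt_of_le_of_lt (hc.monotone hij)
      (lt_of_lt_of_le hjPo.2 (hv.antitone hij))⟩
  have hPoRange : Po = Finset.range τ := by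
    rw [hτ]; exact downclosed_eq_range Po hdc
  have hτle : τ ≤ min n m := by
    rw [hτ, hPo]
    calc ((Finset.range (min n m)).filter (fun i => c i < v i)).card
        ≤ (Finset.range (min n m)).card := Finset.card_filter_le _ _
      _ = min n m := Finset.card_range _
  -- Step 2: key pointwise fact
  have hkey : ∀ p q : ℕ, p < n → q < m → c p < v q → p < τ ∨ q < τ := by
    intro p q hpn hqm hpq
    by_contra hcon
    push_neg at hcon
    obtain ⟨hp, hq⟩ := hcon
    have hτlt : τ < min n m := lt_min (lt_of_le_of_lt hp hpn) (lt_of_le_of_lt hq hqm)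
    have hτnot : τ ∉ Po := by rw [hPoRange]; simp
    have hnot : ¬ (c τ < v τ) := by
      intro hlt
      exact hτnot (by rw [hPo]; exact Finset.mem_filter.mpr ⟨Finset.mem_range.mpr hτlt, hlt⟩)
    have hvτ : v τ < c τ := lt_of_le_of_ne (not_lt.mp hnot) (fun h => hcv τ τ h.symm)
    have : v q ≤ v τ := hv.antitone hq
    have : c τ ≤ c p := hc.monotone hp
    linarith
  -- Step 3: s ≤ max A B
  set A := (Po ∩ PT).card with hA
  set B := (Po ∩ BT).card with hB
  have hsmax : s ≤ max A B := by
    rw [hs, canonSize]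
    have hzm : (List.zip ((PT.sort (· ≤ ·)).map c) ((BT.sort (· ≤ ·)).map v))
        = ((PT.sort (· ≤ ·)).zip (BT.sort (· ≤ ·))).map (Prod.map c v) := by
      rw [List.zip_map]
    rw [hzm, List.countP_map]
    have hmono : ∀ x ∈ (PT.sort (· ≤ ·)).zip (BT.sort (· ≤ ·)),
        ((fun y => decide (y.1 < y.2)) ∘ Prod.map c v) x = true →
        (fun y : ℕ × ℕ => decide (y.1 < τ ∨ y.2 < τ)) x = true := by
      rintro ⟨a, b⟩ hx hcx
      obtain ⟨hxa, hxb⟩ := List.of_mem_zip hx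
      rw [Finset.mem_sort] at hxa hxb
      simp only [Function.comp_apply, Prod.map_apply, decide_eq_true_eq] at hcx
      simp only [decide_eq_true_eq]
      exact hkey a b (Finset.mem_range.mp (hPT hxa)) (Finset.mem_range.mp (hBT hxb)) hcx
    calc ((PT.sort (· ≤ ·)).zip (BT.sort (· ≤ ·))).countP
            ((fun y => decide (y.1 < y.2)) ∘ Prod.map c v)
        ≤ ((PT.sort (· ≤ ·)).zip (BT.sort (· ≤ ·))).countP
            (fun y : ℕ × ℕ => decide (y.1 < τ ∨ y.2 < τ)) :=
          List.countP_mono_left hmono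
      _ ≤ max ((PT.sort (· ≤ ·)).countP (fun a => decide (a < τ)))
              ((BT.sort (· ≤ ·)).countP (fun a => decide (a < τ))) :=
          countP_zip_le_max τ _ _ (Finset.pairwise_sort _ _) (Finset.pairwise_sort _ _)
      _ = max A B := by
          rw [countP_sort, countP_sort, hA, hB, hPoRange]
          congr 1 <;> · congr 1
                        ext a
                        simp [Finset.mem_filter, Finset.mem_inter, Finset.mem_range, and_comm]
  -- Step 4: numeric bounds
  set β : ℝ := α ^ ((1 : ℝ) / 3) with hβ
  have hα0 : (0:ℝ) < α := lt_of_lt_of_le (by positivity) hα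
  have hβ0 : (0:ℝ) < β := Real.rpow_pos_of_pos hα0 _
  have hτR : (0:ℝ) < τ := by exact_mod_cast hτpos
  have habs1 := abs_le.mp hE1
  have habs2 := abs_le.mp hE2
  have hAlow : r * τ - β * τ ≤ (A:ℝ) := by rw [hA]; linarith [habs1.2, habs1.1]
  have hAup : (A:ℝ) ≤ r * τ + β * τ := by rw [hA]; linarith [habs1.2]
  have hBup : (B:ℝ) ≤ r * τ + β * τ := by rw [hB]; linarith [habs2.2]
  have hsR : (s:ℝ) ≤ r * τ + β * τ := by
    rcases max_cases A B with ⟨hm, _⟩ | ⟨hm, _⟩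
    · calc (s:ℝ) ≤ (max A B : ℕ) := by exact_mod_cast hsmax
        _ = (A:ℝ) := by rw [hm]
        _ ≤ _ := hAup
    · calc (s:ℝ) ≤ (max A B : ℕ) := by exact_mod_cast hsmax
        _ = (B:ℝ) := by rw [hm]
        _ ≤ _ := hBup
  -- positivity of the factor
  have hxspos : 0 < (1 - 2 * r⁻¹ * β) * (s : ℝ) := by
    by_contra hnp
    push_neg at hnp
    have : L = 0 := by rw [hL]; exact Nat.ceil_eq_zero.mpr hnp
    omega
  have hs0 : (0:ℝ) < s := by
    rcases Nat.eq_zero_or_pos s with h0 | h0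
    · rw [h0] at hxspos; simp at hxspos
    · exact_mod_cast h0
  have hxpos : 0 < 1 - 2 * r⁻¹ * β := by
    by_contra h
    push_neg at h
    nlinarith
  -- L ≤ A
  have hLA : L ≤ A := by
    rw [hL, Nat.ceil_le]
    have h1 : (1 - 2 * r⁻¹ * β) * (s:ℝ) ≤ (1 - 2 * r⁻¹ * β) * (r * τ + β * τ) :=
      mul_le_mul_of_nonneg_left hsR (le_of_lt hxpos)
    have h2 : (1 - 2 * r⁻¹ * β) * (r * τ + β * τ) ≤ r * τ - β * τ := by
      have hrne : r ≠ 0 := ne_of_gt hr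
      have hinv : r⁻¹ * r = 1 := inv_mul_cancel₀ hrne
      have hinvpos : 0 < r⁻¹ := inv_pos.mpr hr
      nlinarith [mul_pos hβ0 hτR, mul_pos hinvpos (mul_pos hβ0 (mul_pos hβ0 hτR))]
    linarith [hAlow]
  -- Step 5: phat < τ
  have hphatτ : phat < τ := by
    by_contra hge
    push_neg at hge
    have hsub : Po ∩ PT ⊆ (PT.filter (fun q => q ≤ phat)).erase phat := by
      intro q hq
      rw [Finset.mem_inter, hPoRange, Finset.mem_range] at hq
      refine Finset.mem_erase.mpr ⟨?_, Finset.mem_filter.mpr ⟨hq.2, le_trans (le_of_lt hq.1) hge⟩⟩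
      omega
    have hmem : phat ∈ PT.filter (fun q => q ≤ phat) :=
      Finset.mem_filter.mpr ⟨hphat₁, le_refl _⟩
    have := Finset.card_le_card hsub
    rw [Finset.card_erase_of_mem hmem, hphat₂] at this
    omega
  -- Step 6: conclude
  intro p hpn hpPT hcp
  have hpphat : p < phat := hc.lt_iff_lt.mp hcp
  rw [hPoRange, Finset.mem_range]
  omega
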